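/- Let H be an infinite-dimensional Hilbert space and (U_n) a sequence of unitary operators converging to 0 in the weak operator topology. If T is a bounded operator commuting with every U_n, then every λ in the spectrum of T lies in its essential spectrum; that is, sp(T) = sp_ess(T). -/

import Mathlib

open Metric ContinuousLinearMap Filter

/-- A closed subspace on which some compact operator acts as the identity is
finite-dimensional. -/
lemma aux_findim {H : Type*} [NormedAddCommGroup H] [NormedSpace ℂ H]
    {W : Submodule ℂ H} (hW : IsClosed (W : Set H)) {K : H →L[ℂ] H}
    (hK : IsCompactOperator K) (hid : ∀ x ∈ W, K x = x) :
    FiniteDimensional ℂ W := by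
  have hK' : IsCompactOperator ⇑(K.toLinearMap) := hK
  obtain ⟨M, hM, hKM⟩ := hK'.image_closedBall_subset_compact 1
  set C : Set H := (W : Set H) ∩ closedBall 0 1 with hC
  have hCM : C ⊆ M := fun x hx => hKM ⟨x, hx.2, hid x hx.1⟩
  have hCc : IsCompact C := hM.of_isClosed_subset (hW.inter Metric.isClosed_closedBall) hCM
  have he := hW.isClosedEmbedding_subtypeVal
  have : IsCompact (closedBall (0 : W) 1) := by
    have : closedBall (0 : W) 1 = ((↑) : W → H) ⁻¹' C := by
      ext x
      simp [hC, mem_closedBall, dist_eq_norm, Submodule.coe_norm]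
    rw [this]
    exact he.isCompact_preimage hCc
  exact FiniteDimensional.of_isCompact_closedBall₀ ℂ one_pos this

/-- A finite-dimensional subspace invariant under a sequence of unitaries tending
weakly to zero is trivial. -/
lemma aux_bot {H : Type*} [NormedAddCommGroup H] [InnerProductSpace ℂ H]
    [CompleteSpace H]
    (U : ℕ → (H →L[ℂ] H)) (hU : ∀ n, U n ∈ unitary (H →L[ℂ] H))
    (hweak : ∀ x y : H,
      Filter.Tendsto (fun n => (inner ℂ ((U n) x) y : ℂ)) Filter.atTop (nhds 0))
    (W : Submodule ℂ H) [FiniteDimensional ℂ W]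
    (hinv : ∀ n, ∀ x ∈ W, U n x ∈ W) : W = ⊥ := by
  by_contra hne
  obtain ⟨x, hxW, hx0⟩ := Submodule.exists_mem_ne_zero_of_ne_bot hne
  let b := stdOrthonormalBasis ℂ W
  set v : ℕ → W := fun n => ⟨U n x, hinv n x hxW⟩ with hv
  have hvn : ∀ n, (inner ℂ (v n) (v n) : ℂ) = (‖x‖ : ℂ) ^ 2 := by
    intro n
    have : (inner ℂ (v n) (v n) : ℂ) = (inner ℂ (U n x) (U n x) : ℂ) := rfl
    rw [this, inner_self_eq_norm_sq_to_K, (U n).norm_map_of_mem_unitary (hU n)]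
    norm_cast
  have htend : Tendsto (fun n => (inner ℂ (v n) (v n) : ℂ)) atTop (nhds 0) := by
    have hexp : ∀ n, (inner ℂ (v n) (v n) : ℂ)
        = ∑ i, (inner ℂ (v n) (b i) : ℂ) * (inner ℂ (b i) (v n) : ℂ) := fun n =>
      (b.sum_inner_mul_inner (v n) (v n)).symm
    simp only [hexp]
    have : Tendsto (fun n => ∑ i, (inner ℂ (v n) (b i) : ℂ) * (inner ℂ (b i) (v n) : ℂ))
        atTop (nhds (∑ i : Fin (Module.finrank ℂ W), (0 : ℂ))) := by
      apply tendsto_finset_sum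
      intro i _
      have h1 : Tendsto (fun n => (inner ℂ (v n) (b i) : ℂ)) atTop (nhds 0) := by
        have : ∀ n, (inner ℂ (v n) (b i) : ℂ) = (inner ℂ (U n x) ((b i : W) : H) : ℂ) := fun n => rfl
        simpa only [this] using hweak x ((b i : W) : H)
      have h2 : Tendsto (fun n => (inner ℂ (b i) (v n) : ℂ)) atTop (nhds 0) := by
        have h3 : Tendsto (fun n => (starRingEnd ℂ) (inner ℂ (v n) (b i) : ℂ)) atTop (nhds 0) := by
          have := (Complex.continuous_conj.tendsto 0).comp h1
          simpa [Function.comp_def] using this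
        simpa only [inner_conj_symm] using h3
      simpa using h1.mul h2
    simpa using this
  have := tendsto_nhds_unique (by simpa only [hvn] using htend : Tendsto
      (fun _ : ℕ => ((‖x‖ : ℂ) ^ 2)) atTop (nhds 0)) tendsto_const_nhds
  have : ‖x‖ = 0 := by
    have := this.symm
    simpa using this
  exact hx0 (norm_eq_zero.mp this)

/-- Fredholm-type bound below: if `S * A - 1` is compact and `A` is injective,
then `A` is bounded below. -/
lemma aux_bddBelow {H : Type*} [NormedAddCommGroup H] [NormedSpace ℂ H]
    [CompleteSpace H] (A S : H →L[ℂ] H)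
    (hK : IsCompactOperator ⇑(S * A - 1))
    (hinj : ∀ x, A x = 0 → x = 0) :
    ∃ c : ℝ, 0 < c ∧ ∀ x, c * ‖x‖ ≤ ‖A x‖ := by
  by_contra hc
  push_neg at hc
  have hex : ∀ n : ℕ, ∃ u : H, ‖u‖ = 1 ∧ ‖A u‖ < 1 / (n + 1) := by
    intro n
    obtain ⟨x, hx⟩ := hc (1 / (n + 1)) (by positivity)
    have hx0 : x ≠ 0 := by
      intro h; rw [h] at hx; simp at hx
    refine ⟨‖x‖⁻¹ • x, ?_, ?_⟩
    · rw [norm_smul, norm_inv, norm_norm, inv_mul_cancel₀ (norm_ne_zero_iff.mpr hx0)]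
    · rw [ContinuousLinearMap.map_smul_of_tower, norm_smul, norm_inv, norm_norm]
      rw [inv_mul_lt_iff₀ (norm_pos_iff.mpr hx0)]
      calc ‖A x‖ < 1 / (n + 1) * ‖x‖ := hx
        _ = ‖x‖ * (1 / (n+1)) := by ring
        _ ≤ _ := le_rfl
  choose u hu1 hu2 using hex
  have hK' : IsCompactOperator ⇑((S * A - 1).toLinearMap) := hK
  obtain ⟨M, hM, hKM⟩ := hK'.image_closedBall_subset_compact 1
  have hmem : ∀ n, (S * A - 1) (u n) ∈ M := fun n =>
    hKM ⟨u n, by simp [mem_closedBall, dist_eq_norm, hu1 n], rfl⟩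
  obtain ⟨y, -, φ, hφ, hy⟩ := hM.tendsto_subseq hmem
  have hAu : Tendsto (fun n => A (u n)) atTop (nhds 0) := by
    rw [tendsto_zero_iff_norm_tendsto_zero]
    apply squeeze_zero (fun n => norm_nonneg _) (fun n => (hu2 n).le)
    exact tendsto_one_div_add_atTop_nhds_zero_nat
  have hSAu : Tendsto (fun n => S (A (u n))) atTop (nhds 0) := by
    simpa [Function.comp_def] using (S.continuous.tendsto 0).comp hAu
  have huφ : Tendsto (fun n => u (φ n)) atTop (nhds (-y)) := by
    have heq : ∀ n, u (φ n) = S (A (u (φ n))) - (S * A - 1) (u (φ n)) := by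
      intro n
      simp only [ContinuousLinearMap.sub_apply, ContinuousLinearMap.mul_apply,
        ContinuousLinearMap.one_apply]
      abel
    have h0 : Tendsto (fun n => S (A (u (φ n))) - (S * A - 1) (u (φ n))) atTop (nhds (0 - y)) :=
      Tendsto.sub (hSAu.comp hφ.tendsto_atTop) hy
    simpa using h0.congr fun n => (heq n).symm
  have hny : ‖-y‖ = 1 := by
    have h1 : Tendsto (fun n => ‖u (φ n)‖) atTop (nhds ‖-y‖) :=
      (continuous_norm.tendsto _).comp huφ
    have h2 : Tendsto (fun n => ‖u (φ n)‖) atTop (nhds 1) := by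
      simpa [hu1] using (tendsto_const_nhds : Tendsto (fun _ : ℕ => (1:ℝ)) atTop (nhds 1))
    exact tendsto_nhds_unique h1 h2
  have hAy : A (-y) = 0 := by
    have h1 : Tendsto (fun n => A (u (φ n))) atTop (nhds (A (-y))) :=
      (A.continuous.tendsto _).comp huφ
    have h2 : Tendsto (fun n => A (u (φ n))) atTop (nhds 0) := hAu.comp hφ.tendsto_atTop
    exact tendsto_nhds_unique h1 h2
  have : -y = 0 := hinj _ hAy
  rw [this] at hny
  simp at hny

/-- The essential spectrum of a bounded operator: `λ` belongs to it iff `T - λ` is not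
invertible modulo compact operators, i.e. iff the image of `T - λ` in the Calkin
algebra is not invertible. -/
def essSpec {H : Type*} [NormedAddCommGroup H] [NormedSpace ℂ H]
    (T : H →L[ℂ] H) : Set ℂ :=
  {z | ¬ ∃ S : H →L[ℂ] H,
    IsCompactOperator (⇑((T - algebraMap ℂ (H →L[ℂ] H) z) * S - 1)) ∧
    IsCompactOperator (⇑(S * (T - algebraMap ℂ (H →L[ℂ] H) z) - 1))}

/-- If `T` commutes with a sequence of unitaries converging weakly to `0` on an
infinite-dimensional Hilbert space, then the spectrum of `T` is purely essential. -/
theorem stmt_19 {H : Type*} [NormedAddCommGroup H] [InnerProductSpace ℂ H]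
    [CompleteSpace H] (hinf : ¬ FiniteDimensional ℂ H)
    (U : ℕ → (H →L[ℂ] H)) (hU : ∀ n, U n ∈ unitary (H →L[ℂ] H))
    (hweak : ∀ x y : H,
      Filter.Tendsto (fun n => (inner ℂ ((U n) x) y : ℂ)) Filter.atTop (nhds 0))
    (T : H →L[ℂ] H) (hcomm : ∀ n, Commute T (U n)) :
    spectrum ℂ T = essSpec T := by
  ext z
  simp only [essSpec, Set.mem_setOf_eq]
  constructor
  · -- z ∈ spectrum → ¬ ∃ S, ...
    intro hz hS
    obtain ⟨S, hK1, hK2⟩ := hS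
    set A : H →L[ℂ] H := T - algebraMap ℂ (H →L[ℂ] H) z with hA
    have hAcomm : ∀ n, Commute A (U n) := fun n =>
      (hcomm n).sub_left (Algebra.commutes z (U n))
    have hstar : ∀ n, A * star (U n) = star (U n) * A := by
      intro n
      obtain ⟨hu1, hu2⟩ := Unitary.mem_iff.mp (hU n)
      calc A * star (U n) = 1 * (A * star (U n)) := (one_mul _).symm
        _ = (star (U n) * U n) * (A * star (U n)) := by rw [hu1]
        _ = star (U n) * ((U n * A) * star (U n)) := by simp [mul_assoc]
        _ = star (U n) * ((A * U n) * star (U n)) := by rw [(hAcomm n).eq]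
        _ = star (U n) * (A * (U n * star (U n))) := by simp [mul_assoc]
        _ = star (U n) * A := by rw [hu2, mul_one]
    -- the kernel of A is trivial
    haveI hkerfd : FiniteDimensional ℂ (LinearMap.ker (A : H →ₗ[ℂ] H)) := by
      refine aux_findim (K := 1 - S * A) (ContinuousLinearMap.isClosed_ker A) ?_ ?_
      · have h := hK2.neg
        have heq : ⇑(1 - S * A) = -⇑(S * A - 1) := by
          funext x
          simp [ContinuousLinearMap.sub_apply, ContinuousLinearMap.mul_apply,
            ContinuousLinearMap.one_apply]
        rw [heq]; exact h
      · intro x hx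
        have hx0 : A x = 0 := LinearMap.mem_ker.mp hx
        simp [ContinuousLinearMap.sub_apply, ContinuousLinearMap.mul_apply,
          ContinuousLinearMap.one_apply, hx0]
    have hkerinv : ∀ n, ∀ x ∈ LinearMap.ker (A : H →ₗ[ℂ] H), U n x ∈ LinearMap.ker (A : H →ₗ[ℂ] H) := by
      intro n x hx
      have hx0 : A x = 0 := LinearMap.mem_ker.mp hx
      have : A (U n x) = U n (A x) := by
        have := congrFun (congrArg (fun (B : H →L[ℂ] H) => ⇑B) (hAcomm n).eq) x
        simpa [ContinuousLinearMap.mul_apply] using this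
      rw [LinearMap.mem_ker, ContinuousLinearMap.coe_coe, this, hx0, map_zero]
    have hkerbot : LinearMap.ker (A : H →ₗ[ℂ] H) = ⊥ := aux_bot U hU hweak _ hkerinv
    have hinj : ∀ x, A x = 0 → x = 0 := by
      intro x hx
      have : x ∈ LinearMap.ker (A : H →ₗ[ℂ] H) := LinearMap.mem_ker.mpr hx
      rw [hkerbot] at this
      simpa using this
    -- A is bounded below, hence has closed range
    obtain ⟨c, hc, hbound⟩ := aux_bddBelow A S hK2 hinj
    have hantilip : AntilipschitzWith (c.toNNReal)⁻¹ A := by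
      refine A.antilipschitz_of_bound fun x => ?_
      rw [NNReal.coe_inv, Real.coe_toNNReal c hc.le, ← div_eq_inv_mul,
        le_div_iff₀ hc]
      linarith [hbound x]
    have hclosed : IsClosed ((LinearMap.range (A : H →ₗ[ℂ] H) : Submodule ℂ H) : Set H) := by
      have : ((LinearMap.range (A : H →ₗ[ℂ] H) : Submodule ℂ H) : Set H) = Set.range ⇑A := by
        ext x; simp [LinearMap.mem_range]
      rw [this]
      exact hantilip.isClosed_range A.uniformContinuous
    haveI : CompleteSpace (LinearMap.range (A : H →ₗ[ℂ] H)) := hclosed.completeSpace_coe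
    -- the orthogonal complement of the range is trivial
    set W : Submodule ℂ H := (LinearMap.range (A : H →ₗ[ℂ] H))ᗮ with hW
    have hWclosed : IsClosed (W : Set H) := Submodule.isClosed_orthogonal _
    set P : H →L[ℂ] H := W.subtypeL.comp W.orthogonalProjectionOnto with hP
    have hPzero : ∀ v : H, P (A v) = 0 := by
      intro v
      have hmem : A v ∈ Wᗮ := by
        apply Submodule.le_orthogonal_orthogonal
        exact LinearMap.mem_range_self _ v
      simp [hP, Submodule.orthogonalProjectionOnto_apply_of_mem_orthogonal hmem]
    haveI hWfd : FiniteDimensional ℂ W := by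
      refine aux_findim (K := -(P.comp (A * S - 1))) hWclosed ?_ ?_
      · have h := (hK1.continuous_comp P.continuous).neg
        have heq : ⇑(-(P.comp (A * S - 1))) = -(⇑P ∘ ⇑(A * S - 1)) := by
          funext x; simp
        rw [heq]; exact h
      · intro y hy
        have h1 : P y = y := by
          simp only [hP, ContinuousLinearMap.comp_apply, Submodule.subtypeL_apply]
          exact Submodule.starProjection_eq_self_iff.mpr hy
        have : (A * S - 1) y = A (S y) - y := by
          simp [ContinuousLinearMap.sub_apply, ContinuousLinearMap.mul_apply]
        rw [ContinuousLinearMap.neg_apply, ContinuousLinearMap.comp_apply, this,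
          map_sub, hPzero, h1, zero_sub, neg_neg]
    have hWinv : ∀ n, ∀ y ∈ W, U n y ∈ W := by
      intro n y hy
      rw [hW, Submodule.mem_orthogonal]
      rintro u ⟨v, rfl⟩
      have h1 : (inner ℂ ((ContinuousLinearMap.adjoint (U n)) (A v)) y : ℂ)
          = (inner ℂ (A v) (U n y) : ℂ) := ContinuousLinearMap.adjoint_inner_left _ _ _
      have h2 : (ContinuousLinearMap.adjoint (U n)) (A v) = A (star (U n) v) := by
        rw [← ContinuousLinearMap.star_eq_adjoint]
        have := congrFun (congrArg (fun (B : H →L[ℂ] H) => ⇑B) (hstar n).symm) v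
        simpa [ContinuousLinearMap.mul_apply] using this
      rw [ContinuousLinearMap.coe_coe, ← h1, h2]
      exact (Submodule.mem_orthogonal _ _).mp hy _ (LinearMap.mem_range_self _ _)
    have hWbot : W = ⊥ := aux_bot U hU hweak W hWinv
    have hrange : LinearMap.range (A : H →ₗ[ℂ] H) = ⊤ := Submodule.orthogonal_eq_bot_iff.mp hWbot
    -- A is invertible
    let e := ContinuousLinearEquiv.ofBijective A hkerbot hrange
    have hunit : IsUnit A := by
      refine ⟨⟨A, (e.symm : H →L[ℂ] H), ?_, ?_⟩, rfl⟩
      · ext x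
        have : A (e.symm x) = e (e.symm x) := rfl
        simp only [ContinuousLinearMap.mul_apply, ContinuousLinearMap.one_apply,
          ContinuousLinearMap.coe_coe, this]
        exact e.apply_symm_apply x
      · ext x
        have : e.symm (A x) = e.symm (e x) := rfl
        simp only [ContinuousLinearMap.mul_apply, ContinuousLinearMap.one_apply,
          ContinuousLinearMap.coe_coe, this]
        exact e.symm_apply_apply x
    have : IsUnit (algebraMap ℂ (H →L[ℂ] H) z - T) := by
      have := hunit.neg
      rwa [hA, neg_sub] at this
    exact (spectrum.notMem_iff.mpr this) hz
  · -- ¬ ∃ S, ... → z ∈ spectrum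
    intro h
    by_contra hz
    obtain ⟨u, hu⟩ := spectrum.notMem_iff.mp hz
    apply h
    refine ⟨-(↑u⁻¹ : H →L[ℂ] H), ?_, ?_⟩
    · have : (T - algebraMap ℂ (H →L[ℂ] H) z) * -(↑u⁻¹ : H →L[ℂ] H) - 1 = 0 := by
        have h1 : (T - algebraMap ℂ (H →L[ℂ] H) z) = -(u : H →L[ℂ] H) := by
          rw [hu, neg_sub]
        rw [h1]
        simp [u.mul_inv]
      rw [this]
      exact isCompactOperator_zero
    · have : -(↑u⁻¹ : H →L[ℂ] H) * (T - algebraMap ℂ (H →L[ℂ] H) z) - 1 = 0 := by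
        have h1 : (T - algebraMap ℂ (H →L[ℂ] H) z) = -(u : H →L[ℂ] H) := by
          rw [hu, neg_sub]
        rw [h1]
        simp [u.inv_mul]
      rw [this]
      exact isCompactOperator_zero
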